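/- Let m > 0, n ∈ ℕ with n ≥ 1, and t ≥ 0. Let R₁ and R₂ be independent Poisson random variables with mean m n² t / 2, and set X = (R₁ − R₂)/n. Then for every a ∈ ℝ, E[exp(a X)] = exp( m n² t (cosh(a/n) − 1) ); and for every a ∈ ℝ with |a| ≤ n, | m n² t (cosh(a/n) − 1) − (1/2) m a² t | ≤ m t |a|³ / n. -/

import Mathlib

open MeasureTheory

lemma real_exp_eq_tsum (x : ℝ) : (∑' n : ℕ, x ^ n / (n.factorial : ℝ)) = Real.exp x := by
  rw [Real.exp_eq_exp_ℝ, NormedSpace.exp_eq_tsum_div]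

lemma poisson_mgf_aux {Ω : Type*} [MeasurableSpace Ω] (μ : Measure Ω) [IsProbabilityMeasure μ]
    (lam : ℝ) (hlam : 0 ≤ lam) (R : Ω → ℕ) (hR : Measurable R)
    (hlaw : ∀ j : ℕ, (μ {ω | R ω = j}).toReal
      = Real.exp (-lam) * lam ^ j / (j.factorial : ℝ))
    (c : ℝ) :
    ∫ ω, Real.exp (c * R ω) ∂μ = Real.exp (lam * (Real.exp c - 1)) := by
  have hmeas : Measurable (fun ω => Real.exp (c * (R ω : ℝ))) := by fun_prop
  have hmap : ∀ j : ℕ, (μ.map R) {j}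
      = ENNReal.ofReal (Real.exp (-lam) * lam ^ j / (j.factorial : ℝ)) := by
    intro j
    rw [Measure.map_apply hR (measurableSet_singleton j)]
    have h : R ⁻¹' {j} = {ω | R ω = j} := rfl
    rw [h, ← hlaw j, ENNReal.ofReal_toReal (measure_ne_top μ _)]
  have hsummand : ∀ j : ℕ,
      Real.exp (c * (j : ℝ)) * (Real.exp (-lam) * lam ^ j / (j.factorial : ℝ))
        = Real.exp (-lam) * ((lam * Real.exp c) ^ j / (j.factorial : ℝ)) := by
    intro j
    rw [mul_pow, ← Real.exp_nat_mul]
    ring_nf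
  have hsummable : Summable (fun j : ℕ =>
      Real.exp (c * (j : ℝ)) * (Real.exp (-lam) * lam ^ j / (j.factorial : ℝ))) := by
    apply Summable.congr (((Real.summable_pow_div_factorial (lam * Real.exp c)).mul_left
      (Real.exp (-lam))))
    intro j
    exact (hsummand j).symm
  have hnonneg : ∀ j : ℕ,
      0 ≤ Real.exp (c * (j : ℝ)) * (Real.exp (-lam) * lam ^ j / (j.factorial : ℝ)) := by
    intro j
    have : 0 ≤ lam ^ j := pow_nonneg hlam j
    positivity
  have htsum : (∑' j : ℕ, Real.exp (c * (j : ℝ)) * (Real.exp (-lam) * lam ^ j / (j.factorial : ℝ)))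
      = Real.exp (lam * (Real.exp c - 1)) := by
    calc (∑' j : ℕ, Real.exp (c * (j : ℝ)) * (Real.exp (-lam) * lam ^ j / (j.factorial : ℝ)))
        = ∑' j : ℕ, Real.exp (-lam) * ((lam * Real.exp c) ^ j / (j.factorial : ℝ)) :=
          tsum_congr hsummand
      _ = Real.exp (-lam) * ∑' j : ℕ, (lam * Real.exp c) ^ j / (j.factorial : ℝ) := tsum_mul_left
      _ = Real.exp (-lam) * Real.exp (lam * Real.exp c) := by rw [real_exp_eq_tsum]
      _ = Real.exp (lam * (Real.exp c - 1)) := by rw [← Real.exp_add]; ring_nf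
  have key : ∫⁻ ω, ENNReal.ofReal (Real.exp (c * (R ω : ℝ))) ∂μ
      = ENNReal.ofReal (Real.exp (lam * (Real.exp c - 1))) := by
    have hmf : Measurable (fun j : ℕ => ENNReal.ofReal (Real.exp (c * (j : ℝ)))) :=
      measurable_from_top
    rw [← lintegral_map hmf hR, lintegral_countable']
    calc (∑' j : ℕ, ENNReal.ofReal (Real.exp (c * (j : ℝ))) * (μ.map R) {j})
        = ∑' j : ℕ, ENNReal.ofReal
            (Real.exp (c * (j : ℝ)) * (Real.exp (-lam) * lam ^ j / (j.factorial : ℝ))) := by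
          refine tsum_congr fun j => ?_
          rw [hmap j, ← ENNReal.ofReal_mul (Real.exp_pos _).le]
      _ = ENNReal.ofReal (∑' j : ℕ,
            Real.exp (c * (j : ℝ)) * (Real.exp (-lam) * lam ^ j / (j.factorial : ℝ))) :=
          (ENNReal.ofReal_tsum_of_nonneg hnonneg hsummable).symm
      _ = ENNReal.ofReal (Real.exp (lam * (Real.exp c - 1))) := by rw [htsum]
  rw [integral_eq_lintegral_of_nonneg_ae (ae_of_all μ fun ω => (Real.exp_pos _).le)
    hmeas.aestronglyMeasurable, key, ENNReal.toReal_ofReal (Real.exp_pos _).le]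

theorem skellam_mgf
    (m : ℝ) (hm : 0 < m) (n : ℕ) (hn : 1 ≤ n) (t : ℝ) (ht : 0 ≤ t)
    {Ω : Type*} [MeasurableSpace Ω] (μ : Measure Ω) [IsProbabilityMeasure μ]
    (R₁ R₂ : Ω → ℕ) (hR₁ : Measurable R₁) (hR₂ : Measurable R₂)
    (hIndep : ProbabilityTheory.IndepFun R₁ R₂ μ)
    (hlaw₁ : ∀ j : ℕ, (μ {ω | R₁ ω = j}).toReal
      = Real.exp (-(m * n ^ 2 * t / 2)) * (m * n ^ 2 * t / 2) ^ j / (j.factorial : ℝ))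
    (hlaw₂ : ∀ j : ℕ, (μ {ω | R₂ ω = j}).toReal
      = Real.exp (-(m * n ^ 2 * t / 2)) * (m * n ^ 2 * t / 2) ^ j / (j.factorial : ℝ))
    (X : Ω → ℝ) (hX : ∀ ω, X ω = ((R₁ ω : ℝ) - (R₂ ω : ℝ)) / n) :
    ∀ a : ℝ,
      (∫ ω, Real.exp (a * X ω) ∂μ)
          = Real.exp (m * n ^ 2 * t * (Real.cosh (a / n) - 1)) ∧
      (|a| ≤ n →
        |m * n ^ 2 * t * (Real.cosh (a / n) - 1) - 1 / 2 * m * a ^ 2 * t|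
          ≤ m * t * |a| ^ 3 / n) := by
  have hn0 : (n : ℝ) ≠ 0 := by positivity
  have hnpos : (0 : ℝ) < n := by positivity
  intro a
  constructor
  · -- MGF computation
    set lam : ℝ := m * n ^ 2 * t / 2 with hlamdef
    have hlam : 0 ≤ lam := by positivity
    have h1 := poisson_mgf_aux μ lam hlam R₁ hR₁ hlaw₁ (a / n)
    have h2 := poisson_mgf_aux μ lam hlam R₂ hR₂ hlaw₂ (-(a / n))
    have hprod : (fun ω => Real.exp (a * X ω))
        = (fun ω => Real.exp ((a / n) * (R₁ ω : ℝ)))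
          * (fun ω => Real.exp (-(a / n) * (R₂ ω : ℝ))) := by
      funext ω
      simp only [Pi.mul_apply, ← Real.exp_add, hX ω]
      congr 1
      field_simp
      ring
    have hindep' : ProbabilityTheory.IndepFun
        (fun ω => Real.exp ((a / n) * (R₁ ω : ℝ)))
        (fun ω => Real.exp (-(a / n) * (R₂ ω : ℝ))) μ :=
      hIndep.comp (measurable_from_top (f := fun j : ℕ => Real.exp ((a / n) * (j : ℝ))))
        (measurable_from_top (f := fun j : ℕ => Real.exp (-(a / n) * (j : ℝ))))
    rw [hprod, hindep'.integral_mul_eq_mul_integral (by fun_prop) (by fun_prop), h1, h2, ← Real.exp_add]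
    congr 1
    rw [Real.cosh_eq, hlamdef]
    ring
  · -- error bound
    intro ha
    set x : ℝ := a / n with hxdef
    have hx1 : |x| ≤ 1 := by
      rw [hxdef, abs_div, abs_of_pos hnpos, div_le_one hnpos]
      exact ha
    have hS : ∀ y : ℝ, (∑ i ∈ Finset.range 3, y ^ i / (i.factorial : ℝ))
        = 1 + y + y ^ 2 / 2 := by
      intro y
      rw [Finset.sum_range_succ, Finset.sum_range_succ, Finset.sum_range_one]
      norm_num [Nat.factorial]
    have h1 := Real.exp_bound hx1 (by norm_num : 0 < 3)
    have h2 := Real.exp_bound (x := -x) (by rwa [abs_neg]) (by norm_num : 0 < 3)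
    rw [hS] at h1
    rw [hS, abs_neg] at h2
    have hcosh : Real.cosh x - 1 - x ^ 2 / 2
        = ((Real.exp x - (1 + x + x ^ 2 / 2)) + (Real.exp (-x) - (1 + -x + (-x) ^ 2 / 2))) / 2 := by
      rw [Real.cosh_eq]
      ring
    have h1' : |Real.exp x - (1 + x + x ^ 2 / 2)| ≤ |x| ^ 3 * (4 / 18) :=
      h1.trans (le_of_eq (by norm_num [Nat.factorial]))
    have h2' : |Real.exp (-x) - (1 + -x + (-x) ^ 2 / 2)| ≤ |x| ^ 3 * (4 / 18) :=
      h2.trans (le_of_eq (by norm_num [Nat.factorial]))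
    have hbound : |Real.cosh x - 1 - x ^ 2 / 2| ≤ |x| ^ 3 := by
      rw [hcosh, abs_div, abs_two]
      have habs := abs_add_le (Real.exp x - (1 + x + x ^ 2 / 2))
        (Real.exp (-x) - (1 + -x + (-x) ^ 2 / 2))
      have h3 : (0:ℝ) ≤ |x| ^ 3 := pow_nonneg (abs_nonneg x) 3
      linarith
    have heq : m * n ^ 2 * t * (Real.cosh (a / n) - 1) - 1 / 2 * m * a ^ 2 * t
        = m * n ^ 2 * t * (Real.cosh x - 1 - x ^ 2 / 2) := by
      rw [hxdef]
      field_simp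
    rw [heq, abs_mul, abs_of_nonneg (by positivity : (0:ℝ) ≤ m * n ^ 2 * t)]
    have hx3 : |x| ^ 3 = |a| ^ 3 / (n : ℝ) ^ 3 := by
      rw [hxdef, abs_div, abs_of_pos hnpos, div_pow]
    calc m * n ^ 2 * t * |Real.cosh x - 1 - x ^ 2 / 2|
        ≤ m * n ^ 2 * t * |x| ^ 3 := by gcongr
      _ = m * t * |a| ^ 3 / n := by rw [hx3]; field_simp
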